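/- Ramana's primal-dual SDP pair has a nonzero finite duality gap: the optimal value of the primal (min x₁₁ subject to x₁₁ + 2x₂₃ = 1, x₂₂ = 0, X ⪰ 0 over symmetric 3×3 X) equals 1, while the optimal value of the dual (max y₁ subject to [[1−y₁,0,0],[0,−y₂,−y₁],[0,−y₁,0]] ⪰ 0) equals 0. -/

import Mathlib

lemma lin_nonneg_imp_zero (c d : ℝ) (h : ∀ t : ℝ, 0 ≤ t * c + d) : c = 0 := by
  by_contra hc
  have h1 := h (-(d + 1) / c)
  have : -(d + 1) / c * c = -(d + 1) := by field_simp
  rw [this] at h1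
  linarith

/-- Ramana's primal-dual SDP pair has a finite nonzero duality gap:
the primal optimal value is `1` while the dual optimal value is `0`. -/
theorem ramana_duality_gap :
    IsLeast {v : ℝ | ∃ X : Matrix (Fin 3) (Fin 3) ℝ, X.PosSemidef ∧
      X 0 0 + 2 * X 1 2 = 1 ∧ X 1 1 = 0 ∧ v = X 0 0} 1 ∧
    IsGreatest {v : ℝ | ∃ y₂ : ℝ,
      (!![1 - v, 0, 0; 0, -y₂, -v; 0, -v, 0] : Matrix (Fin 3) (Fin 3) ℝ).PosSemidef} 0 := by
  have hdiag : (Matrix.diagonal ![1, 0, 0] : Matrix (Fin 3) (Fin 3) ℝ).PosSemidef :=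
    Matrix.PosSemidef.diagonal (by intro i; fin_cases i <;> norm_num)
  constructor
  · constructor
    · exact ⟨Matrix.diagonal ![1, 0, 0], hdiag, by simp [Matrix.diagonal],
        by simp [Matrix.diagonal], by simp [Matrix.diagonal]⟩
    · rintro v ⟨X, ⟨hherm, hquad⟩, hc1, hc2, hv⟩
      have hX12 : X 1 2 = 0 := by
        apply lin_nonneg_imp_zero _ (X 2 2 / 2)
        intro t
        have h := (Matrix.posSemidef_iff_dotProduct_mulVec.mp ⟨hherm, hquad⟩).2 ![0, t, 1]
        have hsym : X 2 1 = X 1 2 := by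
          have := congrFun (congrFun hherm 1) 2
          simpa [Matrix.conjTranspose_apply] using this
        simp only [dotProduct, Matrix.mulVec, Fin.sum_univ_three, Matrix.cons_val_zero,
          Matrix.cons_val_one, Matrix.head_cons, star_trivial, Matrix.cons_val_two,
          Matrix.tail_cons] at h
        rw [hc2, hsym] at h
        linarith
      rw [hv]
      linarith
  · constructor
    · refine ⟨0, ?_⟩
      convert hdiag using 1
      ext i j
      fin_cases i <;> fin_cases j <;>
        simp [Matrix.diagonal, Matrix.vecHead, Matrix.vecTail]
    · rintro v ⟨y₂, ⟨hherm, hquad⟩⟩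
      have hv0 : v = 0 := by
        have := lin_nonneg_imp_zero (-2 * v) (-y₂) ?_
        · linarith
        · intro t
          have h := (Matrix.posSemidef_iff_dotProduct_mulVec.mp ⟨hherm, hquad⟩).2 ![0, 1, t]
          simp [dotProduct, Matrix.mulVec, Fin.sum_univ_three, Function.comp,
            Matrix.vecHead, Matrix.vecTail] at h
          linarith
      linarith
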